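/- Let p be a prime and N a positive integer with p > N. Then there exists a positive integer a < p such that v_p(B_N(a)·H_{Na}) = 0, where B_N(m) = (Nm)!/m!^N. -/

import Mathlib

/-- The `n`-th harmonic number `H_n = ∑_{i=1}^n 1/i`, as a rational number. -/
def H (n : ℕ) : ℚ := ∑ i ∈ Finset.range n, (1 : ℚ) / (i + 1)

/-- `B_N(m) = (Nm)!/(m!)^N`, as a rational number. -/
def B (N m : ℕ) : ℚ := (Nat.factorial (N * m) : ℚ) / ((Nat.factorial m : ℚ)) ^ N

lemma H_pos {n : ℕ} (hn : 1 ≤ n) : 0 < H n := by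
  apply Finset.sum_pos
  · intro i _; positivity
  · exact ⟨0, Finset.mem_range.mpr hn⟩

lemma valH (p : ℕ) [hp : Fact p.Prime] (n : ℕ) (h1 : p ≤ n) (h2 : n < 2 * p)
    (h3 : 2 ≤ n) : padicValRat p (H n) = -1 := by
  have hp2 : 2 ≤ p := hp.out.two_le
  have hmem : p - 1 ∈ Finset.range n := Finset.mem_range.mpr (by omega)
  have hF : ∀ i : ℕ, (0:ℚ) < 1 / (i + 1) := fun i => by positivity
  -- valuation of the term 1/p is -1
  have hvp : padicValRat p ((1:ℚ) / ((p - 1 : ℕ) + 1)) = -1 := by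
    have : ((p - 1 : ℕ) : ℚ) + 1 = (p : ℚ) := by
      have : ((p - 1 : ℕ) : ℚ) = (p : ℚ) - 1 := by
        push_cast [Nat.cast_sub (by omega : 1 ≤ p)]; ring
      rw [this]; ring
    rw [this, one_div, padicValRat.inv, padicValRat.self hp.out.one_lt]
  -- every other term has valuation 0
  have hv0 : ∀ i ∈ (Finset.range n).erase (p - 1),
      padicValRat p ((1:ℚ) / (i + 1)) = 0 := by
    intro i hi
    rw [Finset.mem_erase, Finset.mem_range] at hi
    have hnd : ¬ p ∣ (i + 1) := by
      intro ⟨k, hk⟩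
      have hk2 : p * k < p * 2 := by omega
      have hk' : k < 2 := lt_of_mul_lt_mul_left hk2 (Nat.zero_le p)
      interval_cases k <;> omega
    have : ((i : ℚ) + 1) = ((i + 1 : ℕ) : ℚ) := by push_cast; ring
    rw [this, one_div, padicValRat.inv, padicValRat.of_nat,
      padicValNat.eq_zero_of_not_dvd hnd]
    simp
  have hne : ((Finset.range n).erase (p - 1)).Nonempty := by
    rcases Nat.lt_or_ge (p - 1) 1 with h | h
    · exact ⟨1, Finset.mem_erase.mpr ⟨by omega, Finset.mem_range.mpr (by omega)⟩⟩
    · exact ⟨0, Finset.mem_erase.mpr ⟨by omega, Finset.mem_range.mpr (by omega)⟩⟩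
  have hsum : H n = (1:ℚ) / ((p - 1 : ℕ) + 1)
      + ∑ i ∈ (Finset.range n).erase (p - 1), (1:ℚ) / (i + 1) := by
    rw [H, ← Finset.add_sum_erase _ _ hmem]
  have hrpos : (0:ℚ) < ∑ i ∈ (Finset.range n).erase (p - 1), (1:ℚ) / (i + 1) :=
    Finset.sum_pos (fun i _ => hF i) hne
  have hlt : padicValRat p ((1:ℚ) / ((p - 1 : ℕ) + 1))
      < padicValRat p (∑ i ∈ (Finset.range n).erase (p - 1), (1:ℚ) / (i + 1)) := by
    have := padicValRat.lt_sum_of_lt (p := p) (j := p - 1)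
      (F := fun i => (1:ℚ) / (i + 1)) (S := (Finset.range n).erase (p - 1)) hne
      (fun i hi => by rw [hv0 i hi]; simp only [hvp]; norm_num)
      (fun i => hF i)
    simpa using this
  rw [hsum, padicValRat.add_eq_of_lt (by positivity) (by positivity)
    (ne_of_gt hrpos) hlt, hvp]

lemma valB (p N a : ℕ) [hp : Fact p.Prime] (ha : a < p) (h1 : p ≤ N * a)
    (h2 : N * a < 2 * p) : padicValRat p (B N a) = 1 := by
  have hp2 : 2 ≤ p := hp.out.two_le
  have hfa : padicValNat p (Nat.factorial a) = 0 :=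
    padicValNat.eq_zero_of_not_dvd (fun h =>
      absurd ((Nat.Prime.dvd_factorial hp.out).mp h) (by omega))
  have hfna : padicValNat p (Nat.factorial (N * a)) = 1 := by
    have hlog : Nat.log p (N * a) < 2 := by
      rw [Nat.log_lt_iff_lt_pow hp.out.one_lt (by omega)]
      nlinarith
    rw [padicValNat_factorial hlog]
    have : Finset.Ico 1 2 = {1} := rfl
    rw [this, Finset.sum_singleton, pow_one]
    exact Nat.div_eq_of_lt_le (by omega) (by omega)
  have hane : (Nat.factorial a : ℚ) ≠ 0 := Nat.cast_ne_zero.mpr (Nat.factorial_ne_zero a)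
  rw [B, padicValRat.div (Nat.cast_ne_zero.mpr (Nat.factorial_ne_zero _)) (pow_ne_zero _ hane),
    padicValRat.pow _, padicValRat.of_nat, padicValRat.of_nat, hfa, hfna]
  simp

theorem exists_a_vp_zero (p N : ℕ) (hp : p.Prime) (hN : 1 ≤ N) (hpN : N < p) :
    ∃ a : ℕ, 1 ≤ a ∧ a < p ∧ padicValRat p (B N a * H (N * a)) = 0 := by
  haveI : Fact p.Prime := ⟨hp⟩
  rcases eq_or_lt_of_le hN with h1 | h2
  · -- N = 1, a = 1
    refine ⟨1, le_refl 1, by omega, ?_⟩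
    have : B N 1 * H (N * 1) = 1 := by
      rw [← h1]; simp [B, H, Nat.factorial]
    rw [this, padicValRat.one]
  · -- N ≥ 2, a = p / N + 1
    have hN2 : 2 ≤ N := h2
    have hp3 : 3 ≤ p := by
      rcases Nat.lt_or_ge p 3 with h | h
      · interval_cases p <;> omega
      · exact h
    obtain ⟨a, hadef⟩ : ∃ a, a = p / N + 1 := ⟨_, rfl⟩
    have heq : N * (p / N) + p % N = p := Nat.div_add_mod p N
    have hmod : p % N < N := Nat.mod_lt p (by omega)
    have hNeq : N * a = N * (p / N) + N := by rw [hadef]; ring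
    have hNa1 : p ≤ N * a := by rw [hNeq]; omega
    have hNa2 : N * a < 2 * p := by rw [hNeq]; omega
    have hap : a < p := by
      have hpn2 : p / N ≤ p / 2 := Nat.div_le_div_left hN2 (by omega)
      omega
    refine ⟨a, by rw [hadef]; exact Nat.le_add_left 1 _, hap, ?_⟩
    have hBpos : (0:ℚ) < B N a := by
      rw [B]; positivity
    have hHpos : 0 < H (N * a) := H_pos (by nlinarith)
    rw [padicValRat.mul (ne_of_gt hBpos) (ne_of_gt hHpos),
      valB p N a hap hNa1 hNa2, valH p (N * a) hNa1 hNa2 (by nlinarith)]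
    ring
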